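/- Let e ∈ S^{n−1}, E = e^⊥, and let u : ℝ^n → (−∞,∞] be a proper, lsc, super-coercive convex function. Then for every ε > 0 and every x ∈ ℝ^n of the form x = x_E + r e with x_E ∈ proj_E dom(u) and r ∈ ℝ, the infimal convolution u □ I_{[o,εe]} satisfies: (u □ I_{[o,εe]})(x_E + re) = u(x_E + re) if r ≤ m_u(x_E); = (proj_E u)(x_E) if m_u(x_E) < r < m_u(x_E) + ε; and = u(x_E + (r−ε)e) if r ≥ m_u(x_E) + ε, where m_u(x_E) is the midpoint of the compact interval argmin_{s∈ℝ} u(x_E + s e). -/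

import Mathlib

open Metric MeasureTheory Set
open scoped InnerProductSpace RealInnerProductSpace ENNReal Pointwise NNReal Classical

noncomputable section

/-- Support function of a convex body. -/
def supportFn {n : ℕ} (K : ConvexBody (EuclideanSpace ℝ (Fin n)))
    (u : EuclideanSpace ℝ (Fin n)) : ℝ :=
  sSup ((fun y => ⟪u, y⟫_ℝ) '' (K : Set (EuclideanSpace ℝ (Fin n))))

/-- Subdifferential of a real-valued function. -/
def subdiff {W : Type*} [NormedAddCommGroup W] [InnerProductSpace ℝ W]
    (w : W → ℝ) (x : W) : Set W :=
  {y | ∀ z, w x + ⟪y, z - x⟫_ℝ ≤ w z}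

/-- Monge–Ampère measure (as a set function) of a finite-valued convex function. -/
def MAfn {n : ℕ} (v : EuclideanSpace ℝ (Fin n) → ℝ) (B : Set (EuclideanSpace ℝ (Fin n))) : ℝ≥0∞ :=
  volume (⋃ b ∈ B, subdiff v b)

/-- The Euclidean unit ball as a convex body. -/
def unitBody (n : ℕ) : ConvexBody (EuclideanSpace ℝ (Fin n)) :=
  ⟨closedBall 0 1, convex_closedBall 0 1, isCompact_closedBall 0 1,
    Metric.nonempty_closedBall.mpr zero_le_one⟩

/-- κ_i, the volume of the i-dimensional unit ball. -/
def kappa (i : ℕ) : ℝ := (volume (closedBall (0 : EuclideanSpace ℝ (Fin i)) 1)).toReal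

/-- segment from origin to a point, as a convex body -/
def segBody {n : ℕ} (e : EuclideanSpace ℝ (Fin n)) : ConvexBody (EuclideanSpace ℝ (Fin n)) :=
  ⟨segment ℝ 0 e, convex_segment 0 e, by
      rw [segment_eq_image ℝ 0 e]
      exact (isCompact_Icc).image (by fun_prop),
    ⟨0, left_mem_segment ℝ 0 e⟩⟩

/-- convex indicator function, with values in EReal -/
def indicatorE {W : Type*} [Zero W] (s : Set W) : W → EReal := fun x => if x ∈ s then (0 : EReal) else ⊤

/-- infimal convolution -/
def infConv {W : Type*} [AddGroup W] (u v : W → EReal) : W → EReal :=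
  fun x => ⨅ y, u (x - y) + v y

/-- epi-multiplication -/
def epiMul {W : Type*} [AddCommGroup W] [Module ℝ W] (lam : ℝ) (u : W → EReal) : W → EReal :=
  if lam = 0 then indicatorE {0} else fun x => (lam : EReal) * u (lam⁻¹ • x)

/-- Legendre--Fenchel conjugate -/
def conj {W : Type*} [NormedAddCommGroup W] [InnerProductSpace ℝ W] (u : W → EReal) : W → EReal :=
  fun x => ⨆ y, ((⟪x, y⟫_ℝ : ℝ) : EReal) - u y

/-- an EReal-valued function is proper -/
def ProperE {W : Type*} (u : W → EReal) : Prop := (∀ x, u x ≠ ⊥) ∧ ∃ x, u x ≠ ⊤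

/-- convexity via the epigraph -/
def ConvexE {W : Type*} [AddCommGroup W] [Module ℝ W] (u : W → EReal) : Prop :=
  Convex ℝ {p : W × ℝ | u p.1 ≤ (p.2 : EReal)}

/-- super-coercive -/
def SuperCoercive {W : Type*} [NormedAddCommGroup W] (u : W → EReal) : Prop :=
  ∀ c : ℝ, ∃ R : ℝ, ∀ x, R ≤ ‖x‖ → ((c * ‖x‖ : ℝ) : EReal) ≤ u x



/-- A lower semicontinuous `EReal`-valued function attains a minimum on a nonempty
compact set. -/
lemma exists_min_on_compact_lsc {X : Type*} [TopologicalSpace X] [T2Space X] {f : X → EReal}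
    (hf : LowerSemicontinuous f) {K : Set X} (hK : IsCompact K) (hne : K.Nonempty) :
    ∃ x ∈ K, ∀ y ∈ K, f x ≤ f y := by
  haveI : Nonempty K := hne.to_subtype
  set C : K → Set X := fun t => K ∩ {x | f x ≤ f t} with hC
  have hclosed : ∀ t : K, IsClosed {x | f x ≤ f (t : X)} := fun t =>
    hf.isClosed_preimage (f t)
  have hdir : Directed (· ⊇ ·) C := by
    intro t t'
    rcases le_total (f (t : X)) (f (t' : X)) with h | h
    · exact ⟨t, fun x hx => hx, fun x hx => ⟨hx.1, hx.2.trans h⟩⟩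
    · exact ⟨t', fun x hx => ⟨hx.1, hx.2.trans h⟩, fun x hx => hx⟩
  have hnec : ∀ t : K, (C t).Nonempty := fun t => ⟨t, t.2, show f (t:X) ≤ f (t:X) from le_rfl⟩
  have hcomp : ∀ t : K, IsCompact (C t) := fun t => hK.inter_right (hclosed t)
  have hcl : ∀ t : K, IsClosed (C t) := fun t => (hK.isClosed).inter (hclosed t)
  obtain ⟨x, hx⟩ := IsCompact.nonempty_iInter_of_directed_nonempty_isCompact_isClosed
    C hdir hnec hcomp hcl
  have hx' : ∀ t : K, x ∈ C t := Set.mem_iInter.1 hx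
  refine ⟨x, (hx' (Classical.arbitrary K)).1, fun y hy => (hx' ⟨y, hy⟩).2⟩

/-- the explicit three-case formula for `u □ I_{[o,εe]}` along the fiber
`x_E + ℝ e`, where `m` is the midpoint of the argmin interval of `s ↦ u(x_E + s e)`. -/
theorem infConv_indicator_segment_cases {n : ℕ}
    (u : EuclideanSpace ℝ (Fin n) → EReal)
    (hproper : ProperE u) (hlsc : LowerSemicontinuous u) (hconv : ConvexE u)
    (hsc : SuperCoercive u)
    (e : EuclideanSpace ℝ (Fin n)) (he : ‖e‖ = 1)
    (xE : EuclideanSpace ℝ (Fin n)) (hxE : ⟪xE, e⟫_ℝ = 0)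
    (hdom : ∃ s : ℝ, u (xE + s • e) ≠ ⊤)
    (A : Set ℝ) (hA : A = {s : ℝ | ∀ t : ℝ, u (xE + s • e) ≤ u (xE + t • e)})
    (m : ℝ) (hm : m = (sInf A + sSup A) / 2)
    (ε : ℝ) (hε : 0 < ε) (r : ℝ) :
    (r ≤ m →
      infConv u (indicatorE (segment ℝ 0 (ε • e))) (xE + r • e) = u (xE + r • e)) ∧
    (m < r → r < m + ε →
      infConv u (indicatorE (segment ℝ 0 (ε • e))) (xE + r • e) = ⨅ s : ℝ, u (xE + s • e)) ∧
    (m + ε ≤ r →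
      infConv u (indicatorE (segment ℝ 0 (ε • e))) (xE + r • e) = u (xE + (r - ε) • e)) := by
  classical
  set f : ℝ → EReal := fun s => u (xE + s • e) with hfdef
  have hfbot : ∀ s, f s ≠ ⊥ := fun s => hproper.1 _
  have hA' : A = {s : ℝ | ∀ t : ℝ, f s ≤ f t} := hA
  -- quasi-convexity of the fiber function
  have hqc : ∀ s t w : ℝ, s ≤ t → t ≤ w → f t ≤ max (f s) (f w) := by
    intro s t w hst htw
    rcases eq_or_ne (f s) ⊤ with hs | hs
    · exact le_trans le_top (le_max_of_le_left hs.ge)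
    rcases eq_or_ne (f w) ⊤ with hw | hw
    · exact le_trans le_top (le_max_of_le_right hw.ge)
    rcases eq_or_lt_of_le (hst.trans htw) with hsw | hsw
    · have hts : t = s := le_antisymm (hsw ▸ htw) hst
      rw [hts]; exact le_max_left _ _
    set θ : ℝ := (t - s) / (w - s) with hθdef
    have hws : (0:ℝ) < w - s := by linarith
    have hθ0 : 0 ≤ θ := div_nonneg (by linarith) hws.le
    have hθ1 : θ ≤ 1 := (div_le_one hws).2 (by linarith)
    have hcomb : (1 - θ) * s + θ * w = t := by
      have hθw : θ * (w - s) = t - s := by rw [hθdef]; exact div_mul_cancel₀ _ hws.ne'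
      linear_combination hθw
    set cs : ℝ := (f s).toReal with hcsdef
    set cw : ℝ := (f w).toReal with hcwdef
    have hcs : (cs : EReal) = f s := EReal.coe_toReal hs (hfbot s)
    have hcw : (cw : EReal) = f w := EReal.coe_toReal hw (hfbot w)
    have hp : (xE + s • e, cs) ∈ {p : EuclideanSpace ℝ (Fin n) × ℝ | u p.1 ≤ (p.2 : EReal)} := by
      simp only [Set.mem_setOf_eq]; exact hcs.symm.le
    have hq : (xE + w • e, cw) ∈ {p : EuclideanSpace ℝ (Fin n) × ℝ | u p.1 ≤ (p.2 : EReal)} := by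
      simp only [Set.mem_setOf_eq]; exact hcw.symm.le
    have hmem := hconv hp hq (by linarith : (0:ℝ) ≤ 1 - θ) hθ0 (by ring)
    simp only [Prod.smul_mk, Prod.mk_add_mk, Set.mem_setOf_eq, smul_eq_mul] at hmem
    have hfirst : (1 - θ) • (xE + s • e) + θ • (xE + w • e)
        = xE + ((1 - θ) * s + θ * w) • e := by module
    rw [hfirst, hcomb] at hmem
    have hreal : (1 - θ) * cs + θ * cw ≤ max cs cw := by
      nlinarith [le_max_left cs cw, le_max_right cs cw]
    refine hmem.trans ?_
    rcases le_total cs cw with h | h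
    · rw [max_eq_right (hcs ▸ hcw ▸ EReal.coe_le_coe_iff.2 h), ← hcw]
      exact EReal.coe_le_coe_iff.2 (hreal.trans (by rw [max_eq_right h]))
    · rw [max_eq_left (hcs ▸ hcw ▸ EReal.coe_le_coe_iff.2 h), ← hcs]
      exact EReal.coe_le_coe_iff.2 (hreal.trans (by rw [max_eq_left h]))
  -- lower semicontinuity of the fiber function
  have hcont : Continuous fun s : ℝ => xE + s • e := by fun_prop
  have hflsc : LowerSemicontinuous f := hlsc.comp hcont
  -- growth estimate
  obtain ⟨R, hR⟩ := hsc 1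
  have hip : ∀ s : ℝ, |s| ≤ ‖xE + s • e‖ := by
    intro s
    have h1 : ⟪xE + s • e, e⟫_ℝ = s := by
      rw [inner_add_left, real_inner_smul_left, hxE, real_inner_self_eq_norm_mul_norm, he]
      ring
    calc |s| = |⟪xE + s • e, e⟫_ℝ| := by rw [h1]
      _ ≤ ‖xE + s • e‖ * ‖e‖ := abs_real_inner_le_norm _ _
      _ = ‖xE + s • e‖ := by rw [he, mul_one]
  have hgrow : ∀ s : ℝ, max R 0 ≤ |s| → ((|s| : ℝ) : EReal) ≤ f s := by
    intro s hs
    have h2 : R ≤ ‖xE + s • e‖ := le_trans (le_trans (le_max_left R 0) hs) (hip s)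
    refine le_trans ?_ (hR _ h2)
    exact EReal.coe_le_coe_iff.2 (by rw [one_mul]; exact hip s)
  -- existence of a global minimizer
  obtain ⟨s₀, hs₀⟩ := hdom
  have hs₀' : f s₀ ≠ ⊤ := hs₀
  set c₀ : ℝ := (f s₀).toReal with hc₀def
  have hc₀eq : (c₀ : EReal) = f s₀ := EReal.coe_toReal hs₀' (hfbot s₀)
  set M : ℝ := max R 0 + max |s₀| c₀ + 1 with hMdef
  have haux : (0:ℝ) ≤ max |s₀| c₀ := le_trans (abs_nonneg s₀) (le_max_left _ _)
  have hbig : ∀ s : ℝ, M ≤ |s| → f s₀ < f s := by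
    intro s hs
    have h1 := hgrow s (by linarith [le_max_right R (0:ℝ), le_max_left R (0:ℝ)])
    refine lt_of_lt_of_le ?_ h1
    rw [← hc₀eq]
    exact EReal.coe_lt_coe_iff.2 (by
      have : c₀ ≤ max |s₀| c₀ := le_max_right _ _
      linarith [le_max_left R (0:ℝ), le_max_right R (0:ℝ)])
  have hs₀K : s₀ ∈ Icc (-M) M := by
    rw [Set.mem_Icc, ← abs_le]
    linarith [le_max_left |s₀| c₀, le_max_right R (0:ℝ)]
  obtain ⟨x₀, hx₀K, hx₀min⟩ := exists_min_on_compact_lsc hflsc isCompact_Icc ⟨s₀, hs₀K⟩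
  have hx₀glob : ∀ t, f x₀ ≤ f t := by
    intro t
    by_cases ht : t ∈ Icc (-M) M
    · exact hx₀min t ht
    · have hMt : M ≤ |t| := by
        rw [Set.mem_Icc, ← abs_le] at ht
        exact (not_le.1 ht).le
      exact (hx₀min s₀ hs₀K).trans (hbig t hMt).le
  have hminA : ∀ q ∈ A, ∀ t, f q ≤ f t := by
    intro q hq; rw [hA'] at hq; exact hq
  have hAne : A.Nonempty := ⟨x₀, by rw [hA']; exact hx₀glob⟩
  have hAsub : A ⊆ Icc (-M) M := by
    intro s hs
    rw [Set.mem_Icc, ← abs_le]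
    by_contra h
    exact absurd (hminA s hs s₀) (not_le.2 (hbig s (not_le.1 h).le))
  have hbddB : BddBelow A := ⟨-M, fun s hs => (hAsub hs).1⟩
  have hbddA : BddAbove A := ⟨M, fun s hs => (hAsub hs).2⟩
  have hAclosed : IsClosed A := by
    rw [hA']
    have : {s : ℝ | ∀ t : ℝ, f s ≤ f t} = ⋂ t : ℝ, f ⁻¹' Iic (f t) := by
      ext s; simp [Set.mem_iInter]
    rw [this]
    exact isClosed_iInter fun t => hflsc.isClosed_preimage _
  have haA : sInf A ∈ A := hAclosed.csInf_mem hAne hbddB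
  have hbA : sSup A ∈ A := hAclosed.csSup_mem hAne hbddA
  have hab : sInf A ≤ sSup A := csInf_le_csSup hAne hbddB hbddA
  have ham : sInf A ≤ m := by rw [hm]; linarith
  have hmb : m ≤ sSup A := by rw [hm]; linarith
  -- monotonicity on both sides of the argmin interval
  have hmono_right : ∀ q ∈ A, ∀ p s : ℝ, q ≤ p → p ≤ s → f p ≤ f s := by
    intro q hq p s hqp hps
    refine (hqc q p s hqp hps).trans ?_
    rw [max_eq_right (hminA q hq s)]
  have hmono_left : ∀ q ∈ A, ∀ p s : ℝ, s ≤ p → p ≤ q → f p ≤ f s := by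
    intro q hq p s hsp hpq
    refine (hqc s p q hsp hpq).trans ?_
    rw [max_eq_left (hminA q hq s)]
  have hIcc : ∀ t : ℝ, sInf A ≤ t → t ≤ sSup A → t ∈ A := by
    intro t h1 h2
    rw [hA']
    intro t'
    exact (hqc (sInf A) t (sSup A) h1 h2).trans
      (max_le (hminA _ haA t') (hminA _ hbA t'))
  -- description of the segment
  have hseg : ∀ y : EuclideanSpace ℝ (Fin n),
      y ∈ segment ℝ (0 : EuclideanSpace ℝ (Fin n)) (ε • e) ↔
        ∃ t : ℝ, 0 ≤ t ∧ t ≤ ε ∧ y = t • e := by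
    intro y
    rw [segment_eq_image ℝ (0 : EuclideanSpace ℝ (Fin n)) (ε • e)]
    constructor
    · rintro ⟨θ, hθ, rfl⟩
      rw [Set.mem_Icc] at hθ
      exact ⟨θ * ε, mul_nonneg hθ.1 hε.le, by nlinarith [hθ.2], by module⟩
    · rintro ⟨t, ht0, htε, rfl⟩
      have h0 : ((1 : ℝ) - t / ε) • (0 : EuclideanSpace ℝ (Fin n)) + (t / ε) • (ε • e)
          = t • e := by
        rw [smul_zero, zero_add, smul_smul, div_mul_cancel₀ _ hε.ne']
      exact ⟨t / ε, Set.mem_Icc.2 ⟨div_nonneg ht0 hε.le, (div_le_one hε).2 htε⟩, h0⟩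
  -- the two inequalities for the infimal convolution
  have hle : ∀ s : ℝ, r - ε ≤ s → s ≤ r →
      infConv u (indicatorE (segment ℝ 0 (ε • e))) (xE + r • e) ≤ f s := by
    intro s h1 h2
    have hy : (r - s) • e ∈ segment ℝ (0 : EuclideanSpace ℝ (Fin n)) (ε • e) :=
      (hseg _).2 ⟨r - s, by linarith, by linarith, rfl⟩
    have harg : (xE + r • e) - (r - s) • e = xE + s • e := by module
    calc infConv u (indicatorE (segment ℝ 0 (ε • e))) (xE + r • e)
        ≤ u ((xE + r • e) - (r - s) • e) + indicatorE (segment ℝ 0 (ε • e)) ((r - s) • e) :=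
          iInf_le _ _
      _ = f s := by rw [indicatorE, if_pos hy, add_zero, harg]
  have hge : ∀ c : EReal, (∀ s : ℝ, r - ε ≤ s → s ≤ r → c ≤ f s) →
      c ≤ infConv u (indicatorE (segment ℝ 0 (ε • e))) (xE + r • e) := by
    intro c hc
    refine le_iInf fun y => ?_
    by_cases hy : y ∈ segment ℝ (0 : EuclideanSpace ℝ (Fin n)) (ε • e)
    · obtain ⟨t, ht0, htε, rfl⟩ := (hseg y).1 hy
      have harg : (xE + r • e) - t • e = xE + (r - t) • e := by module
      have : u ((xE + r • e) - t • e) + indicatorE (segment ℝ 0 (ε • e)) (t • e)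
          = f (r - t) := by rw [indicatorE, if_pos hy, add_zero, harg]
      rw [this]
      exact hc _ (by linarith) (by linarith)
    · have h1 : indicatorE (segment ℝ 0 (ε • e)) y = ⊤ := by rw [indicatorE, if_neg hy]
      rw [h1, EReal.add_top_of_ne_bot (hproper.1 _)]
      exact le_top
  refine ⟨?_, ?_, ?_⟩
  · -- r ≤ m
    intro hrm
    refine le_antisymm (hle r (by linarith) le_rfl) (hge _ fun s h1 h2 => ?_)
    exact hmono_left (sSup A) hbA r s h2 (by linarith)
  · -- m < r < m + ε
    intro h1 h2
    set q : ℝ := max (sInf A) (r - ε) with hqdef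
    have hqA : q ∈ A := hIcc q (le_max_left _ _) (max_le hab (by linarith))
    have hq1 : r - ε ≤ q := le_max_right _ _
    have hq2 : q ≤ r := max_le (by linarith) (by linarith)
    have hRHS : (⨅ s : ℝ, f s) = f q :=
      le_antisymm (iInf_le _ q) (le_iInf (hminA q hqA))
    rw [show (⨅ s : ℝ, u (xE + s • e)) = f q from hRHS]
    exact le_antisymm (hle q hq1 hq2) (hge _ fun s _ _ => hminA q hqA s)
  · -- m + ε ≤ r
    intro h
    have hle' : sInf A ≤ r - ε := by linarith
    exact le_antisymm (hle (r - ε) le_rfl (by linarith))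
      (hge _ fun s h1 h2 => hmono_right (sInf A) haA (r - ε) s hle' h1)

end
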